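/- Let H be a complex Hilbert space, D ⊆ H a set of unit vectors, and M > 0. Suppose F ∈ H can be written as F = Σ_{j=1}^∞ c_j g_j with g_j ∈ D and Σ_{j=1}^∞ |c_j| ≤ M (the series converging in H). Let (B_k)_{k≥1} be an orthonormal sequence in H such that for every m ≥ 1, writing F_m = F − Σ_{k=1}^{m−1} ⟨F, B_k⟩ B_k, one has |⟨F_m, B_m⟩| ≥ |⟨F_m, g⟩| for every g ∈ D. Then for every m ≥ 1, ‖F − Σ_{k=1}^m ⟨F, B_k⟩ B_k‖ ≤ M/√m. -/

import Mathlib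

/-- Convergence rate of the AFD-type (pre-orthogonal greedy) approximation, abstract form:
if `F = Σ_j c_j g_j` with the `g_j` unit vectors from a dictionary `D` and `Σ_j |c_j| ≤ M`,
and `(B_k)` is an orthonormal sequence such that at each step the maximal selection
principle `|⟨F_m, B_m⟩| ≥ sup_{g ∈ D} |⟨F_m, g⟩|` holds for the residual
`F_m = F − Σ_{k<m} ⟨F, B_k⟩ B_k`, then `‖F − Σ_{k<m} ⟨F, B_k⟩ B_k‖ ≤ M/√m` for all `m ≥ 1`. -/
theorem afd_convergence_rate
    {H : Type*} [NormedAddCommGroup H] [InnerProductSpace ℂ H] [CompleteSpace H]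
    (D : Set H) (hD : ∀ g ∈ D, ‖g‖ = 1) (M : ℝ) (hM : 0 < M)
    (F : H) (c : ℕ → ℂ) (g : ℕ → H) (hg : ∀ j, g j ∈ D)
    (hFsum : HasSum (fun j => c j • g j) F)
    (hc : Summable fun j => ‖c j‖) (hcM : (∑' j, ‖c j‖) ≤ M)
    (B : ℕ → H) (hB : Orthonormal ℂ B)
    (hsel : ∀ m : ℕ, ∀ g' ∈ D,
      ‖(inner ℂ (F - ∑ k ∈ Finset.range m, (inner ℂ F (B k) : ℂ) • B k) g' : ℂ)‖ ≤
        ‖(inner ℂ (F - ∑ k ∈ Finset.range m, (inner ℂ F (B k) : ℂ) • B k) (B m) : ℂ)‖) :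
    ∀ m : ℕ, 1 ≤ m →
      ‖F - ∑ k ∈ Finset.range m, (inner ℂ F (B k) : ℂ) • B k‖ ≤ M / Real.sqrt m := by
  set d : ℕ → ℂ := fun k => (inner ℂ F (B k) : ℂ) with hd_def
  set r : ℕ → H := fun m => F - ∑ k ∈ Finset.range m, d k • B k with hr_def
  have hBij : ∀ i j, (inner ℂ (B i) (B j) : ℂ) = if i = j then 1 else 0 :=
    orthonormal_iff_ite.mp hB
  have hBkF : ∀ k, (inner ℂ (B k) F : ℂ) = starRingEnd ℂ (d k) := fun k =>
    (inner_conj_symm (B k) F).symm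
  have hnormconj : ∀ k, ‖(inner ℂ (B k) F : ℂ)‖ = ‖d k‖ := fun k => by
    rw [hBkF]; exact RCLike.norm_conj _
  have hnormsq : ∀ k, ‖d k‖ ^ 2 = (d k).re ^ 2 + (d k).im ^ 2 := fun k => by
    rw [Complex.sq_norm, Complex.normSq_apply]; ring
  -- inner ℂ of residual with B m
  have h1 : ∀ m, (inner ℂ (r m) (B m) : ℂ) = d m := by
    intro m
    simp only [hr_def, inner_sub_left, sum_inner, inner_smul_left]
    have hz0 : ∑ k ∈ Finset.range m,
        (starRingEnd ℂ) (d k) * (inner ℂ (B k) (B m) : ℂ) = 0 := by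
      refine Finset.sum_eq_zero fun k hk => ?_
      rw [hBij]
      simp [Nat.ne_of_lt (Finset.mem_range.mp hk)]
    rw [hz0, sub_zero]
  -- formula for ⟪r m, F⟫
  have hz : ∀ m, (inner ℂ (r m) F : ℂ)
      = ((‖F‖ ^ 2 : ℝ) : ℂ) - ∑ k ∈ Finset.range m, (starRingEnd ℂ (d k)) ^ 2 := by
    intro m
    simp only [hr_def, inner_sub_left, sum_inner, inner_smul_left]
    rw [inner_self_eq_norm_sq_to_K]
    congr 1
    · norm_cast
    · refine Finset.sum_congr rfl fun k _ => ?_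
      rw [hBkF, sq]
  -- selection bound: ‖⟪r m, F⟫‖ ≤ M * ‖d m‖
  have hzb : ∀ m, ‖(inner ℂ (r m) F : ℂ)‖ ≤ M * ‖d m‖ := by
    intro m
    have hmap := hFsum.mapL (innerSL ℂ (r m))
    simp only [innerSL_apply_apply, inner_smul_right] at hmap
    have hb : ∀ j, ‖c j * (inner ℂ (r m) (g j) : ℂ)‖ ≤ ‖c j‖ * ‖d m‖ := by
      intro j
      rw [norm_mul]
      refine mul_le_mul_of_nonneg_left ?_ (norm_nonneg _)
      have := hsel m (g j) (hg j)
      rwa [h1 m] at this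
    have hsumm : Summable fun j => ‖c j * (inner ℂ (r m) (g j) : ℂ)‖ :=
      Summable.of_nonneg_of_le (fun j => norm_nonneg _) hb (hc.mul_right _)
    calc ‖(inner ℂ (r m) F : ℂ)‖ = ‖∑' j, c j * (inner ℂ (r m) (g j) : ℂ)‖ := by
          rw [hmap.tsum_eq]
      _ ≤ ∑' j, ‖c j * (inner ℂ (r m) (g j) : ℂ)‖ := norm_tsum_le_tsum_norm hsumm
      _ ≤ ∑' j, ‖c j‖ * ‖d m‖ := Summable.tsum_le_tsum hb hsumm (hc.mul_right _)
      _ = (∑' j, ‖c j‖) * ‖d m‖ := tsum_mul_right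
      _ ≤ M * ‖d m‖ := mul_le_mul_of_nonneg_right hcM (norm_nonneg _)
  -- Bessel
  have hbes : ∀ m, ∑ k ∈ Finset.range m, ‖d k‖ ^ 2 ≤ ‖F‖ ^ 2 := by
    intro m
    have h := hB.sum_inner_products_le (s := Finset.range m) F
    simpa only [hnormconj] using h
  -- imaginary parts vanish
  have hrez : ∀ m, 2 * ∑ k ∈ Finset.range m, ((d k).im) ^ 2 ≤ M * ‖d m‖ := by
    intro m
    have hre : (inner ℂ (r m) F : ℂ).re
        = ‖F‖ ^ 2 - ∑ k ∈ Finset.range m, ((d k).re ^ 2 - (d k).im ^ 2) := by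
      rw [hz m]
      simp only [Complex.sub_re, Complex.ofReal_re]
      congr 1
      rw [Complex.re_sum]
      refine Finset.sum_congr rfl fun k _ => ?_
      simp only [sq, Complex.mul_re, Complex.conj_re, Complex.conj_im]
      ring
    have hbess := hbes m
    have hsplit : ∑ k ∈ Finset.range m, ‖d k‖ ^ 2
        = (∑ k ∈ Finset.range m, ((d k).re ^ 2 - (d k).im ^ 2))
          + 2 * ∑ k ∈ Finset.range m, ((d k).im) ^ 2 := by
      rw [Finset.mul_sum, ← Finset.sum_add_distrib]
      exact Finset.sum_congr rfl fun k _ => by rw [hnormsq k]; ring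
    have h2 : 2 * ∑ k ∈ Finset.range m, ((d k).im) ^ 2 ≤ (inner ℂ (r m) F : ℂ).re := by
      rw [hre]; linarith
    calc 2 * ∑ k ∈ Finset.range m, ((d k).im) ^ 2 ≤ (inner ℂ (r m) F : ℂ).re := h2
      _ ≤ ‖(inner ℂ (r m) F : ℂ)‖ := Complex.re_le_norm _
      _ ≤ M * ‖d m‖ := hzb m
  have hsq : Summable fun k => ‖d k‖ ^ 2 := by
    have := hB.inner_products_summable (x := F)
    simpa only [hnormconj] using this
  have him : ∀ k, (d k).im = 0 := by
    intro k
    have hub : ∀ m, k + 1 ≤ m → (2 * (d k).im ^ 2) ^ 2 ≤ M ^ 2 * ‖d m‖ ^ 2 := by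
      intro m hm
      have h1' : (d k).im ^ 2 ≤ ∑ j ∈ Finset.range m, ((d j).im) ^ 2 :=
        Finset.single_le_sum (f := fun j => ((d j).im) ^ 2)
          (fun j _ => sq_nonneg _) (Finset.mem_range.mpr hm)
      have h2' : 2 * (d k).im ^ 2 ≤ M * ‖d m‖ := le_trans (by linarith) (hrez m)
      have hnn : (0:ℝ) ≤ 2 * (d k).im ^ 2 := by positivity
      calc (2 * (d k).im ^ 2) ^ 2 ≤ (M * ‖d m‖) ^ 2 := pow_le_pow_left₀ hnn h2' 2
        _ = M ^ 2 * ‖d m‖ ^ 2 := by ring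
    have hlim : Filter.Tendsto (fun m => M ^ 2 * ‖d m‖ ^ 2) Filter.atTop (nhds 0) := by
      have := hsq.tendsto_atTop_zero
      simpa using this.const_mul (M ^ 2)
    have hle : (2 * (d k).im ^ 2) ^ 2 ≤ 0 :=
      ge_of_tendsto hlim (Filter.eventually_atTop.mpr ⟨k + 1, hub⟩)
    have h5 : (d k).im ^ 2 = 0 :=
      le_antisymm (by nlinarith [sq_nonneg ((d k).im)]) (sq_nonneg _)
    exact (pow_eq_zero_iff two_ne_zero).mp h5
  have hconj : ∀ k, starRingEnd ℂ (d k) = d k := fun k =>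
    Complex.conj_eq_iff_im.mpr (him k)
  -- residual orthogonal to earlier B's
  have h2 : ∀ m j, j < m → (inner ℂ (r m) (B j) : ℂ) = 0 := by
    intro m j hj
    simp only [hr_def, inner_sub_left, sum_inner, inner_smul_left]
    have hsum : ∑ k ∈ Finset.range m,
        (starRingEnd ℂ) (d k) * (inner ℂ (B k) (B j) : ℂ) = starRingEnd ℂ (d j) := by
      rw [Finset.sum_eq_single j]
      · rw [hBij, if_pos rfl, mul_one]
      · intro k _ hkj
        rw [hBij, if_neg hkj, mul_zero]
      · intro hnm; exact absurd (Finset.mem_range.mpr hj) hnm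
    rw [hsum, hconj j]
    exact sub_eq_zero_of_eq rfl
  -- ‖r m‖² ≤ M * ‖d m‖
  have haM : ∀ m, ‖r m‖ ^ 2 ≤ M * ‖d m‖ := by
    intro m
    have hsum0 : (inner ℂ (r m) (∑ k ∈ Finset.range m, d k • B k) : ℂ) = 0 := by
      rw [inner_sum]
      refine Finset.sum_eq_zero fun k hk => ?_
      rw [inner_smul_right, h2 m k (Finset.mem_range.mp hk), mul_zero]
    have hself : (inner ℂ (r m) (r m) : ℂ) = inner ℂ (r m) F := by
      calc (inner ℂ (r m) (r m) : ℂ)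
          = inner ℂ (r m) (F - ∑ k ∈ Finset.range m, d k • B k) := rfl
        _ = (inner ℂ (r m) F : ℂ)
            - inner ℂ (r m) (∑ k ∈ Finset.range m, d k • B k) := inner_sub_right _ _ _
        _ = inner ℂ (r m) F := by rw [hsum0, sub_zero]
    have hre : ‖r m‖ ^ 2 = (inner ℂ (r m) (r m) : ℂ).re := by
      rw [inner_self_eq_norm_sq_to_K]; norm_cast
    rw [hre, hself]
    exact le_trans (Complex.re_le_norm _) (hzb m)
  -- recursion
  have hrec : ∀ m, ‖r (m + 1)‖ ^ 2 = ‖r m‖ ^ 2 - ‖d m‖ ^ 2 := by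
    intro m
    have hstep : r (m + 1) = r m - d m • B m := by
      simp only [hr_def, Finset.sum_range_succ, sub_sub]
    rw [hstep, @norm_sub_sq ℂ]
    have hip : RCLike.re (inner ℂ (r m) (d m • B m) : ℂ) = ‖d m‖ ^ 2 := by
      rw [inner_smul_right, h1 m]
      have hmm : ((d m) * (d m)).re = (d m).re ^ 2 - (d m).im ^ 2 := by
        simp [Complex.mul_re]; ring
      simp only [RCLike.re_to_complex, hmm, hnormsq m, him m]
      ring
    rw [hip, norm_smul, hB.1 m]
    simp only [mul_one]
    ring
  have hF_le : ‖F‖ ≤ M := by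
    have hnorms : (fun j => ‖c j • g j‖) = fun j => ‖c j‖ := by
      funext j; rw [norm_smul, hD (g j) (hg j), mul_one]
    have hsummable : Summable fun j => ‖c j • g j‖ := by rw [hnorms]; exact hc
    calc ‖F‖ = ‖∑' j, c j • g j‖ := by rw [hFsum.tsum_eq]
      _ ≤ ∑' j, ‖c j • g j‖ := norm_tsum_le_tsum_norm hsummable
      _ = ∑' j, ‖c j‖ := by rw [hnorms]
      _ ≤ M := hcM
  have ha0 : ‖r 0‖ ^ 2 ≤ M ^ 2 := by
    have h0 : r 0 = F := by simp [hr_def]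
    rw [h0]
    exact pow_le_pow_left₀ (norm_nonneg _) hF_le 2
  -- the key induction
  have key : ∀ m, 1 ≤ m → ‖r m‖ ^ 2 ≤ M ^ 2 / m := by
    intro m hm
    induction m with
    | zero => omega
    | succ n ih =>
      rcases Nat.eq_or_lt_of_le hm with h | h
      · have hn : n = 0 := by omega
        subst hn
        rw [hrec 0]
        push_cast
        rw [div_one]
        nlinarith [sq_nonneg ‖d 0‖, ha0]
      · have hn1 : 1 ≤ n := by omega
        have ihn := ih hn1
        have hn_pos : (0:ℝ) < n := by exact_mod_cast hn1
        have hdm : ‖r n‖ ^ 2 / M ≤ ‖d n‖ := by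
          rw [div_le_iff₀ hM]
          calc ‖r n‖ ^ 2 ≤ M * ‖d n‖ := haM n
            _ = ‖d n‖ * M := by ring
        have hstep : ‖r (n + 1)‖ ^ 2 ≤ ‖r n‖ ^ 2 - (‖r n‖ ^ 2 / M) ^ 2 := by
          rw [hrec n]
          have hsq' : (‖r n‖ ^ 2 / M) ^ 2 ≤ ‖d n‖ ^ 2 :=
            pow_le_pow_left₀ (by positivity) hdm 2
          linarith
        set a := ‖r n‖ ^ 2 with ha_def
        have ha_nn : 0 ≤ a := sq_nonneg _
        rcases le_or_gt a (M ^ 2 / ((n:ℝ) + 1)) with hcase | hcase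
        · have hle : ‖r (n + 1)‖ ^ 2 ≤ a := by nlinarith [sq_nonneg (a / M)]
          push_cast
          linarith
        · have h1' : a * n ≤ M ^ 2 := (le_div_iff₀ hn_pos).mp ihn
          have h2' : M ^ 2 ≤ a * ((n:ℝ) + 1) := by
            rw [div_lt_iff₀ (by positivity : (0:ℝ) < (n:ℝ) + 1)] at hcase
            linarith
          have hM2 : (0:ℝ) < M ^ 2 := by positivity
          have hprod : (a * M ^ 2 - a ^ 2) * ((n:ℝ) + 1) ≤ M ^ 2 * M ^ 2 := by
            nlinarith [mul_nonneg (le_of_lt hM2) (by linarith : (0:ℝ) ≤ M ^ 2 - a * n),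
              mul_nonneg ha_nn (by linarith : (0:ℝ) ≤ a * ((n:ℝ) + 1) - M ^ 2)]
          have hfrac : a - (a / M) ^ 2 = (a * M ^ 2 - a ^ 2) / M ^ 2 := by
            field_simp
            try ring
          have expand : (a - (a / M) ^ 2) * ((n:ℝ) + 1) ≤ M ^ 2 := by
            rw [hfrac, div_mul_eq_mul_div, div_le_iff₀ hM2]
            try exact hprod
            try linarith
          push_cast
          rw [le_div_iff₀ (by positivity : (0:ℝ) < (n:ℝ) + 1)]
          calc ‖r (n + 1)‖ ^ 2 * ((n:ℝ) + 1)
              ≤ (a - (a / M) ^ 2) * ((n:ℝ) + 1) := by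
                refine mul_le_mul_of_nonneg_right ?_ (by positivity)
                exact hstep
            _ ≤ M ^ 2 := expand
  intro m hm
  have hkey := key m hm
  have hm0 : (0:ℝ) < m := by exact_mod_cast Nat.lt_of_lt_of_le Nat.zero_lt_one hm
  have hs := Real.sqrt_le_sqrt hkey
  rw [Real.sqrt_sq (norm_nonneg _)] at hs
  calc ‖r m‖ ≤ Real.sqrt (M ^ 2 / m) := hs
    _ = M / Real.sqrt m := by
        rw [Real.sqrt_div (sq_nonneg M), Real.sqrt_sq hM.le]
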